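/- arXiv:1508.06982 — 6 statements merged into one kernel-verified Lean document; each statement's English description precedes it below -/
import Mathlib

section
/- Let G be a (possibly infinite) simple graph, k a positive integer, and S a nonempty subset of V(G). Then G is (k,S)-connected if and only if for every vertex v ∈ V(G) − S there exist k paths in G, each with one endpoint v and the other endpoint in S, such that any two of these paths share no vertex other than v. -/
open SimpleGraph

/-- `G` is `k`-connected relative to `S` (`(k,S)`-connected): for every set `T` of fewer
than `k` vertices, every connected component of `G - T` contains a vertex of `S`. -/
def KSConnected {V : Type*} (G : SimpleGraph V) (k : ℕ) (S : Set V) : Prop :=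
  ∀ T : Set V, T.encard < (k : ℕ∞) →
    ∀ v : V, ∀ hv : v ∉ T, ∃ s : V, ∃ hs : s ∉ T, s ∈ S ∧
      (G.induce (Tᶜ : Set V)).Reachable ⟨v, hv⟩ ⟨s, hs⟩

namespace MengerAux

variable {V : Type*} {G : SimpleGraph V}

/-- Every `A`–`B` walk in `G` meets `T`. -/
def Cuts (G : SimpleGraph V) (A B T : Set V) : Prop :=
  ∀ (a b : V), a ∈ A → b ∈ B → ∀ w : G.Walk a b, ∃ t ∈ T, t ∈ w.support

/-- There are `k` pairwise vertex-disjoint `A`–`B` walks. -/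
def DisjFam (G : SimpleGraph V) (A B : Set V) (k : ℕ) : Prop :=
  ∃ (a b : Fin k → V) (w : ∀ i, G.Walk (a i) (b i)),
    (∀ i, a i ∈ A) ∧ (∀ i, b i ∈ B) ∧
    ∀ i j, i ≠ j → ∀ x, x ∈ (w i).support → x ∈ (w j).support → False

theorem cuts_reverse {A B T : Set V} (h : Cuts G A B T) : Cuts G B A T := by
  intro b a hb ha w
  obtain ⟨t, ht, hts⟩ := h a b ha hb w.reverse
  exact ⟨t, ht, by simpa using hts⟩

theorem disjFam_reverse {A B : Set V} {k : ℕ} (h : DisjFam G A B k) : DisjFam G B A k := by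
  obtain ⟨a, b, w, ha, hb, hd⟩ := h
  exact ⟨b, a, fun i => (w i).reverse, hb, ha, fun i j hij x hx hy =>
    hd i j hij x (by simpa using hx) (by simpa using hy)⟩

/-- Take the prefix of a walk up to the *first* vertex lying in `T`. -/
theorem takeUntilFirst {a b : V} (w : G.Walk a b) (T : Set V)
    (h : ∃ z ∈ w.support, z ∈ T) :
    ∃ (t : V) (_ : t ∈ T) (w' : G.Walk a t) (L : List V),
      w'.support = L ++ [t] ∧ (∀ z ∈ L, z ∉ T) ∧
      (∀ z ∈ w'.support, z ∈ w.support) ∧ (∀ e ∈ w'.edges, e ∈ w.edges) := by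
  induction w with
  | nil =>
    obtain ⟨z, hz, hzT⟩ := h
    simp only [Walk.support_nil, List.mem_singleton] at hz
    subst hz
    exact ⟨z, hzT, Walk.nil, [], by simp, by simp, by simp, by simp⟩
  | @cons u c d hadj w ih =>
    by_cases huT : u ∈ T
    · exact ⟨u, huT, Walk.nil, [], by simp, by simp, by simp, by simp⟩
    · obtain ⟨z, hz, hzT⟩ := h
      have hz' : z ∈ w.support := by
        have : z = u ∨ z ∈ w.support := by simpa using hz
        rcases this with rfl | h1
        · exact absurd hzT huT
        · exact h1
      obtain ⟨t, htT, w', L, hsup, hL, hsub, hesub⟩ := ih ⟨z, hz', hzT⟩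
      refine ⟨t, htT, Walk.cons hadj w', u :: L, ?_, ?_, ?_, ?_⟩
      · simp [hsup]
      · intro q hq
        rcases List.mem_cons.mp hq with rfl | hq
        · exact huT
        · exact hL q hq
      · intro z hzs
        rcases (by simpa using hzs : z = u ∨ z ∈ w'.support) with rfl | h1
        · simp
        · simp [hsub z h1]
      · intro e he
        rcases (by simpa using he : e = s(u, c) ∨ e ∈ w'.edges) with rfl | h1
        · simp
        · simp [hesub e h1]

/-- Take the suffix of a walk from the *last* vertex lying in `T`. -/
theorem dropFromLast {a b : V} (w : G.Walk a b) (T : Set V)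
    (h : ∃ z ∈ w.support, z ∈ T) :
    ∃ (t : V) (_ : t ∈ T) (w' : G.Walk t b) (M : List V),
      w'.support = t :: M ∧ (∀ z ∈ M, z ∉ T) ∧
      (∀ z ∈ w'.support, z ∈ w.support) ∧ (∀ e ∈ w'.edges, e ∈ w.edges) := by
  obtain ⟨t, htT, w', L, hsup, hL, hsub, hesub⟩ :=
    takeUntilFirst w.reverse T (by simpa using h)
  refine ⟨t, htT, w'.reverse, L.reverse, ?_, ?_, ?_, ?_⟩
  · rw [Walk.support_reverse, hsup]; simp
  · simpa using hL
  · intro z hz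
    have := hsub z (by simpa using hz)
    simpa using this
  · intro e he
    have := hesub e (by simpa using he)
    simpa using this


/-- A walk in the bottom graph goes nowhere. -/
theorem bot_walk_eq {a b : V} (w : (⊥ : SimpleGraph V).Walk a b) : a = b := by
  cases w with
  | nil => rfl
  | cons h _ => exact absurd h (by simp)

/-- Lift a walk from `G.deleteEdges s` to `G`. -/
def upW {s : Set (Sym2 V)} {a b : V} (w : (G.deleteEdges s).Walk a b) : G.Walk a b :=
  w.transfer G (fun e he => by
    have := w.edges_subset_edgeSet he
    rw [edgeSet_deleteEdges] at this
    exact this.1)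

@[simp] theorem support_upW {s : Set (Sym2 V)} {a b : V} (w : (G.deleteEdges s).Walk a b) :
    (upW w).support = w.support := Walk.support_transfer _ _

/-- If a walk's support decomposes as `L ++ [f]` with `L` avoiding `Y`, then any vertex
`u ∉ Y` of the walk is reachable from the start by a walk avoiding `Y`. -/
theorem prefixAvoiding {a f : V} (w : G.Walk a f) (Y : Set V) :
    ∀ (L : List V), w.support = L ++ [f] → (∀ z ∈ L, z ∉ Y) →
    ∀ u, u ∈ w.support → u ∉ Y →
    ∃ w₁ : G.Walk a u, ∀ z ∈ w₁.support, z ∉ Y := by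
  induction w with
  | nil =>
    intro L hs hL u hu huY
    simp only [Walk.support_nil, List.mem_singleton] at hu
    subst hu
    exact ⟨Walk.nil, by simpa using huY⟩
  | @cons p c d hadj w ih =>
    intro L hs hL u hu huY
    by_cases hup : u = p
    · subst hup
      exact ⟨Walk.nil, by simpa using huY⟩
    · have hu' : u ∈ w.support := by
        have : u = p ∨ u ∈ w.support := by simpa using hu
        tauto
      cases L with
      | nil =>
        exfalso
        have h2 : p :: w.support = [d] := by simpa using hs
        have hlen : w.support.length + 1 = 1 := by simpa using congrArg List.length h2
        exact w.support_ne_nil (List.eq_nil_of_length_eq_zero (by omega))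
      | cons q L' =>
        have h2 : p :: w.support = q :: (L' ++ [d]) := by simpa using hs
        have hqp : p = q := (List.cons.injEq _ _ _ _ ▸ h2).1
        have hs' : w.support = L' ++ [d] := (List.cons.injEq _ _ _ _ ▸ h2).2
        have hpY : p ∉ Y := hqp ▸ hL q (by simp)
        obtain ⟨w₁, hw₁⟩ := ih L' hs' (fun z hz => hL z (by simp [hz])) u hu' huY
        refine ⟨Walk.cons hadj w₁, ?_⟩
        intro z hz
        have : z = p ∨ z ∈ w₁.support := by simpa using hz
        rcases this with rfl | hz'
        · exact hpY
        · exact hw₁ z hz'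

/-- Dual of `prefixAvoiding`. -/
theorem suffixAvoiding {g b : V} (w : G.Walk g b) (Y : Set V)
    (M : List V) (hs : w.support = g :: M) (hM : ∀ z ∈ M, z ∉ Y)
    (u : V) (hu : u ∈ w.support) (huY : u ∉ Y) :
    ∃ w₂ : G.Walk u b, ∀ z ∈ w₂.support, z ∉ Y := by
  have hrs : w.reverse.support = M.reverse ++ [g] := by
    rw [Walk.support_reverse, hs]; simp
  obtain ⟨w₁, hw₁⟩ := prefixAvoiding w.reverse Y M.reverse hrs
    (fun z hz => hM z (by simpa using hz)) u (by simpa using hu) huY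
  exact ⟨w₁.reverse, fun z hz => hw₁ z (by simpa using hz)⟩


/-- If a walk starts at `x`, never revisits `x`, and contains the edge `s(x,y)`,
then dropping the first edge gives a walk from `y` avoiding that edge. -/
theorem firstEdge {x a y : V} (w : G.Walk x a)
    (hx : ∀ z ∈ w.support.tail, z ≠ x) (he : s(x, y) ∈ w.edges) :
    ∃ w₂ : G.Walk y a, (∀ z ∈ w₂.support, z ∈ w.support) ∧ s(x, y) ∉ w₂.edges := by
  cases w with
  | nil => simp at he
  | @cons _ c _ hadj w' =>
    have hxw' : x ∉ w'.support := by
      intro hmem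
      exact hx x (by simpa using hmem) rfl
    have he' : s(x, y) ∉ w'.edges := fun h => hxw' (w'.fst_mem_support_of_mem_edges h)
    have heq : s(x, y) = s(x, c) := by
      have : s(x, y) = s(x, c) ∨ s(x, y) ∈ w'.edges := by simpa using he
      tauto
    have hyc : y = c := by
      rw [Sym2.eq_iff] at heq
      rcases heq with ⟨-, h⟩ | ⟨h1, h2⟩
      · exact h
      · exact absurd (h1 ▸ w'.start_mem_support) hxw'
    subst hyc
    exact ⟨w', fun z hz => by simp [hz], he'⟩

/-- If a walk ends at `x`, with `x` occurring only at the end, and contains edge `s(x,y)`,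
strip that (necessarily final) edge. -/
theorem stripLast {a x y : V} (w : G.Walk a x) (L : List V)
    (hs : w.support = L ++ [x]) (hL : ∀ z ∈ L, z ≠ x) (he : s(x, y) ∈ w.edges) :
    ∃ w₂ : G.Walk a y, (∀ z ∈ w₂.support, z ∈ w.support) ∧ s(x, y) ∉ w₂.edges := by
  have hrt : w.reverse.support.tail = L.reverse := by
    rw [Walk.support_reverse, hs]; simp
  obtain ⟨w₂, hsub, hne⟩ := firstEdge w.reverse
    (by rw [hrt]; intro z hz; exact hL z (by simpa using hz))
    (by simpa using he)
  refine ⟨w₂.reverse, fun z hz => ?_, by simpa using hne⟩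
  have := hsub z (by simpa using hz)
  simpa using this

theorem cutsExtend (G' : SimpleGraph V) {x y : V} (hadj : G.Adj x y)
    (hG' : G' = G.deleteEdges {s(x, y)})
    (A B Y : Set V) (hxY : x ∉ Y)
    (hcYx : Cuts G A B (Y ∪ {x}))
    (hyD : ∀ a ∈ A, ∀ w : G'.Walk a y, ∃ z ∈ w.support, z ∈ Y)
    (Z : Set V) (hZ : Cuts G' A (Y ∪ {x}) Z) :
    Cuts G A B Z := by
  subst hG'
  intro a b ha hb w
  obtain ⟨t, htT, w₁, L, hsup, hL, hsub, hesub⟩ := takeUntilFirst w (Y ∪ {x}) (by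
    obtain ⟨t, ht, hts⟩ := hcYx a b ha hb w; exact ⟨t, hts, ht⟩)
  by_cases hex : s(x, y) ∈ w₁.edges
  · exfalso
    have hxsup : x ∈ w₁.support := w₁.fst_mem_support_of_mem_edges hex
    have hxt : x = t := by
      rw [hsup] at hxsup
      rcases List.mem_append.mp hxsup with h1 | h1
      · exact absurd (by simp : x ∈ Y ∪ {x}) (hL x h1)
      · simpa using h1
    subst hxt
    obtain ⟨w₂, hsub₂, hne₂⟩ := stripLast w₁ L hsup
      (fun z hz hzx => (hL z hz) (by simp [hzx])) hex
    have hw₂' : ∀ e ∈ w₂.edges, e ∉ ({s(x, y)} : Set (Sym2 V)) := by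
      intro e hee hee'
      rw [Set.mem_singleton_iff] at hee'
      exact hne₂ (hee' ▸ hee)
    obtain ⟨z, hz1, hz2⟩ := hyD a ha (w₂.toDeleteEdges _ hw₂')
    have hz1' : z ∈ w₂.support := by
      rwa [Walk.support_transfer] at hz1
    have : z ∈ L ++ [x] := hsup ▸ hsub₂ z hz1'
    rcases List.mem_append.mp this with h1 | h1
    · exact hL z h1 (Or.inl hz2)
    · exact hxY ((by simpa using h1 : z = x) ▸ hz2)
  · have hw₁' : ∀ e ∈ w₁.edges, e ∉ ({s(x, y)} : Set (Sym2 V)) := by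
      intro e hee hee'
      rw [Set.mem_singleton_iff] at hee'
      exact hex (hee' ▸ hee)
    obtain ⟨t', ht', hts'⟩ := hZ a t ha htT (w₁.toDeleteEdges _ hw₁')
    rw [Walk.support_transfer] at hts'
    exact ⟨t', ht', hsub t' hts'⟩


theorem mengerStep [Fintype V] (G' : SimpleGraph V) (A B : Set V) (k : ℕ) {x y : V}
    (hadj : G.Adj x y) (hG' : G' = G.deleteEdges {s(x, y)}) (Y : Set V)
    (IH : ∀ A B : Set V, (∀ T, Cuts G' A B T → k ≤ T.ncard) → DisjFam G' A B k)
    (hmain : ∀ T, Cuts G A B T → k ≤ T.ncard)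
    (hcY : Cuts G' A B Y)
    (hYk : Y.ncard + 1 = k) (hxY : x ∉ Y) (hyY : y ∉ Y)
    (hcYx : Cuts G A B (Y ∪ {x})) (hcYy : Cuts G A B (Y ∪ {y}))
    (hxD : ∃ a ∈ A, ∃ w : G'.Walk a x, ∀ z ∈ w.support, z ∉ Y)
    (hyD : ∀ a ∈ A, ∀ w : G'.Walk a y, ∃ z ∈ w.support, z ∈ Y) :
    DisjFam G A B k := by
  classical
  have hG'' : G' = G.deleteEdges {s(y, x)} := by rw [Sym2.eq_swap]; exact hG'
  -- x is not reachable from B either (avoiding Y), else we contradict hcY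
  have hxDB : ∀ b ∈ B, ∀ w : G'.Walk b x, ∃ z ∈ w.support, z ∈ Y := by
    intro b hb w
    by_contra hcon
    push_neg at hcon
    obtain ⟨a, ha, wa, hwa⟩ := hxD
    obtain ⟨z, hz1, hz2⟩ := hcY a b ha hb (wa.append w.reverse)
    rw [Walk.mem_support_append_iff] at hz2
    rcases hz2 with hz2 | hz2
    · exact hwa z hz2 hz1
    · exact hcon z (by simpa using hz2) hz1
  have claim2 : ∀ Z, Cuts G' A (Y ∪ {x}) Z → k ≤ Z.ncard :=
    fun Z hZ => hmain Z (cutsExtend G' hadj hG' A B Y hxY hcYx hyD Z hZ)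
  have claim2' : ∀ Z, Cuts G' (Y ∪ {y}) B Z → k ≤ Z.ncard := by
    intro Z hZ
    exact hmain Z (cuts_reverse
      (cutsExtend G' hadj.symm hG'' B A Y hyY (cuts_reverse hcYy) hxDB Z (cuts_reverse hZ)))
  subst hG'
  obtain ⟨qa, qf, qw, hqa, hqf, hqd⟩ := IH A (Y ∪ {x}) claim2
  obtain ⟨rg, rb, rw', hrg, hrb, hrd⟩ := IH (Y ∪ {y}) B claim2'
  choose f' hf' Q' L hsupQ hLQ hsubQ hesubQ using
    fun i => takeUntilFirst (qw i) (Y ∪ {x}) ⟨qf i, (qw i).end_mem_support, hqf i⟩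
  choose g' hg' R' M hsupR hMR hsubR hesubR using
    fun i => dropFromLast (rw' i) (Y ∪ {y}) ⟨rg i, (rw' i).start_mem_support, hrg i⟩
  have hf'inj : Function.Injective f' := by
    intro i j hij
    by_contra hne
    refine hqd i j hne (f' i) (hsubQ i _ (Q' i).end_mem_support) (hsubQ j _ ?_)
    rw [hij]
    exact (Q' j).end_mem_support
  have hg'inj : Function.Injective g' := by
    intro i j hij
    by_contra hne
    refine hrd i j hne (g' i) (hsubR i _ (R' i).start_mem_support) (hsubR j _ ?_)
    rw [hij]
    exact (R' j).start_mem_support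
  have hrange_card : ∀ h : Fin k → V, Function.Injective h → (Set.range h).ncard = k := by
    intro h hinj
    rw [← Set.image_univ, Set.ncard_image_of_injective _ hinj, Set.ncard_univ]
    simp
  have hYx_card : (Y ∪ {x}).ncard = k := by
    rw [Set.union_singleton, Set.ncard_insert_of_notMem hxY]
    omega
  have hYy_card : (Y ∪ {y}).ncard = k := by
    rw [Set.union_singleton, Set.ncard_insert_of_notMem hyY]
    omega
  have hrangeQ : Set.range f' = Y ∪ {x} := by
    apply Set.eq_of_subset_of_ncard_le
    · rintro u ⟨i, rfl⟩; exact hf' i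
    · rw [hrange_card f' hf'inj, hYx_card]
    · exact Set.toFinite _
  have hrangeR : Set.range g' = Y ∪ {y} := by
    apply Set.eq_of_subset_of_ncard_le
    · rintro u ⟨i, rfl⟩; exact hg' i
    · rw [hrange_card g' hg'inj, hYy_card]
    · exact Set.toFinite _
  have key : ∀ i j z, z ∈ (Q' i).support → z ∈ (R' j).support →
      z ∈ Y ∧ z = f' i ∧ z = g' j := by
    intro i j z hzi hzj
    have hzY : z ∈ Y := by
      by_contra hzY
      obtain ⟨w₁, hw₁⟩ := prefixAvoiding (Q' i) Y (L i) (hsupQ i)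
        (fun q hq hqY => hLQ i q hq (Or.inl hqY)) z hzi hzY
      obtain ⟨w₂, hw₂⟩ := suffixAvoiding (R' j) Y (M j) (hsupR j)
        (fun q hq hqY => hMR j q hq (Or.inl hqY)) z hzj hzY
      obtain ⟨t, ht1, ht2⟩ := hcY _ _ (hqa i) (hrb j) (w₁.append w₂)
      rw [Walk.mem_support_append_iff] at ht2
      rcases ht2 with ht2 | ht2
      · exact hw₁ t ht2 ht1
      · exact hw₂ t ht2 ht1
    refine ⟨hzY, ?_, ?_⟩
    · have : z ∈ L i ++ [f' i] := hsupQ i ▸ hzi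
      rcases List.mem_append.mp this with h1 | h1
      · exact absurd (Or.inl hzY) (hLQ i z h1)
      · simpa using h1
    · have : z ∈ g' j :: M j := hsupR j ▸ hzj
      rcases List.mem_cons.mp this with h1 | h1
      · exact h1
      · exact absurd (Or.inl hzY) (hMR j z h1)
  set τ : Fin k → V := fun i => if f' i = x then y else f' i with hτdef
  have hfY : ∀ i, f' i ≠ x → f' i ∈ Y := by
    intro i h
    rcases hf' i with h1 | h1
    · exact h1
    · exact absurd (by simpa using h1) h
  have hτmem : ∀ i, τ i ∈ Y ∪ {y} := by
    intro i
    by_cases h : f' i = x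
    · simp [hτdef, h]
    · simp only [hτdef, if_neg h]
      exact Or.inl (hfY i h)
  have hτinj : Function.Injective τ := by
    intro i j hij
    by_cases hi : f' i = x <;> by_cases hj : f' j = x
    · exact hf'inj (hi ▸ hj ▸ rfl)
    · simp only [hτdef, if_pos hi, if_neg hj] at hij
      exact absurd (hij ▸ hfY j hj) hyY
    · simp only [hτdef, if_neg hi, if_pos hj] at hij
      exact absurd (hij ▸ hfY i hi) hyY
    · simp only [hτdef, if_neg hi, if_neg hj] at hij
      exact hf'inj hij
  have hσ : ∀ i, ∃ j, g' j = τ i := by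
    intro i
    have : τ i ∈ Set.range g' := hrangeR ▸ hτmem i
    exact this
  choose σ hσspec using hσ
  have hσinj : Function.Injective σ := fun i j h =>
    hτinj (by rw [← hσspec i, ← hσspec j, h])
  -- build the glued walks
  have hguy : ∀ i, f' i = x → g' (σ i) = y := by
    intro i h
    rw [hσspec i]
    simp [hτdef, h]
  have hguf : ∀ i, f' i ≠ x → g' (σ i) = f' i := by
    intro i h
    rw [hσspec i]
    simp [hτdef, h]
  let S : ∀ i, G.Walk (qa i) (rb (σ i)) := fun i =>
    if h : f' i = x then
      (upW (Q' i)).append ((Walk.cons hadj ((upW (R' (σ i))).copy (hguy i h) rfl)).copy h.symm rfl)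
    else
      (upW (Q' i)).append ((upW (R' (σ i))).copy (hguf i h) rfl)
  have hSsub : ∀ i z, z ∈ (S i).support → z ∈ (Q' i).support ∨ z ∈ (R' (σ i)).support := by
    intro i z hz
    by_cases h : f' i = x
    · simp only [S, dif_pos h] at hz
      rw [Walk.mem_support_append_iff] at hz
      rcases hz with hz | hz
      · exact Or.inl (by simpa using hz)
      · rw [Walk.support_copy, Walk.support_cons] at hz
        rcases List.mem_cons.mp hz with rfl | hz
        · exact Or.inl (h ▸ (Q' i).end_mem_support)
        · exact Or.inr (by simpa using hz)
    · simp only [S, dif_neg h] at hz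
      rw [Walk.mem_support_append_iff] at hz
      rcases hz with hz | hz
      · exact Or.inl (by simpa using hz)
      · exact Or.inr (by simpa using hz)
  refine ⟨qa, fun i => rb (σ i), S, hqa, fun i => hrb (σ i), ?_⟩
  intro i j hij z hzi hzj
  have hτY : ∀ m, τ m ∈ Y → τ m = f' m := by
    intro m hm
    by_cases h : f' m = x
    · exact absurd (by simpa [hτdef, h] using hm) hyY
    · simp [hτdef, h]
  rcases hSsub i z hzi with h1 | h1 <;> rcases hSsub j z hzj with h2 | h2
  · exact hqd i j hij z (hsubQ i z h1) (hsubQ j z h2)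
  · obtain ⟨hzY, hfz, hgz⟩ := key i (σ j) z h1 h2
    have hτj : τ j = z := by rw [← hσspec j, hgz]
    have hτjY : τ j ∈ Y := hτj ▸ hzY
    have : f' i = f' j := by rw [← hfz, ← hτY j hτjY, hτj]
    exact hij (hf'inj this)
  · obtain ⟨hzY, hfz, hgz⟩ := key j (σ i) z h2 h1
    have hτi : τ i = z := by rw [← hσspec i, hgz]
    have hτiY : τ i ∈ Y := hτi ▸ hzY
    have : f' j = f' i := by rw [← hfz, ← hτY i hτiY, hτi]
    exact hij (hf'inj this.symm)
  · exact hrd (σ i) (σ j) (fun hc => hij (hσinj hc)) z (hsubR (σ i) z h1) (hsubR (σ j) z h2)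


/-- Base case: graphs without edges. -/
theorem mengerBase [Fintype V] {A B : Set V} {k : ℕ} (hE : G.edgeSet = ∅)
    (hmain : ∀ T, Cuts G A B T → k ≤ T.ncard) : DisjFam G A B k := by
  classical
  have hbot : G = ⊥ := edgeSet_eq_empty.mp hE
  subst hbot
  have hcut : Cuts ⊥ A B (A ∩ B) := by
    intro a b ha hb w
    have hab := bot_walk_eq w
    subst hab
    exact ⟨a, ⟨ha, hb⟩, w.start_mem_support⟩
  have hk : k ≤ (A ∩ B).ncard := hmain _ hcut
  rw [Set.ncard_eq_toFinset_card'] at hk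
  obtain ⟨s, hs, hcard⟩ := Finset.exists_subset_card_eq hk
  let f : Fin k → V := fun i => (s.equivFin.symm (Fin.cast hcard.symm i) : V)
  have hfmem : ∀ i, f i ∈ A ∩ B := by
    intro i
    have h1 : (s.equivFin.symm (Fin.cast hcard.symm i) : V) ∈ s :=
      (s.equivFin.symm (Fin.cast hcard.symm i)).2
    have := hs h1
    simpa using this
  have hfinj : Function.Injective f := by
    intro i j hij
    have : s.equivFin.symm (Fin.cast hcard.symm i) = s.equivFin.symm (Fin.cast hcard.symm j) :=
      Subtype.ext hij
    have := s.equivFin.symm.injective this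
    simpa [Fin.ext_iff] using this
  refine ⟨f, f, fun _ => Walk.nil, fun i => (hfmem i).1, fun i => (hfmem i).2, ?_⟩
  intro i j hij z hzi hzj
  simp only [Walk.support_nil, List.mem_singleton] at hzi hzj
  exact hij (hfinj (hzi ▸ hzj ▸ rfl))

/-- Finite Menger's theorem (`A`–`B` walk version), auxiliary induction on edges. -/
theorem mengerFinAux [Fintype V] (n : ℕ) :
    ∀ (G : SimpleGraph V) (A B : Set V) (k : ℕ), G.edgeSet.ncard ≤ n →
      (∀ T, Cuts G A B T → k ≤ T.ncard) → DisjFam G A B k := by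
  induction n with
  | zero =>
    intro G A B k hn hmain
    exact mengerBase ((Set.ncard_eq_zero (Set.toFinite _)).mp (Nat.le_zero.mp hn)) hmain
  | succ n ih =>
    intro G A B k hn hmain
    classical
    by_cases hE : G.edgeSet = ∅
    · exact mengerBase hE hmain
    · obtain ⟨e, he⟩ := Set.nonempty_iff_ne_empty.mpr hE
      induction e using Sym2.ind with
      | _ x y =>
      have hadj : G.Adj x y := he
      have hxy_ne : x ≠ y := hadj.ne
      set G' := G.deleteEdges {s(x, y)} with hG'def
      have hcard' : G'.edgeSet.ncard ≤ n := by
        have hdel : G'.edgeSet = G.edgeSet \ {s(x, y)} := edgeSet_deleteEdges _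
        have h1 : (G.edgeSet \ {s(x, y)}).ncard = G.edgeSet.ncard - 1 :=
          Set.ncard_diff_singleton_of_mem he
        have h2 : 1 ≤ G.edgeSet.ncard := by
          rw [Nat.one_le_iff_ne_zero]
          intro hcon
          exact hE ((Set.ncard_eq_zero (Set.toFinite _)).mp hcon)
        rw [hdel, h1]
        omega
      by_cases hsep : ∀ T, Cuts G' A B T → k ≤ T.ncard
      · obtain ⟨a, b, w, ha, hb, hd⟩ := ih G' A B k hcard' hsep
        exact ⟨a, b, fun i => upW (w i), ha, hb, fun i j hij z hzi hzj =>
          hd i j hij z (by simpa using hzi) (by simpa using hzj)⟩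
      · push_neg at hsep
        obtain ⟨Y, hcY, hYlt⟩ := hsep
        have hcutU : ∀ u : V, u ∈ ({x, y} : Set V) → Cuts G A B (Y ∪ {u}) := by
          intro u hu a b ha hb w
          by_cases hew : s(x, y) ∈ w.edges
          · rcases hu with rfl | hu
            · exact ⟨u, Or.inr rfl, w.fst_mem_support_of_mem_edges hew⟩
            · rw [Set.mem_singleton_iff] at hu
              subst hu
              exact ⟨u, Or.inr rfl, w.snd_mem_support_of_mem_edges hew⟩
          · have hw' : ∀ e ∈ w.edges, e ∉ ({s(x, y)} : Set (Sym2 V)) := by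
              intro e hee hee'
              rw [Set.mem_singleton_iff] at hee'
              exact hew (hee' ▸ hee)
            obtain ⟨t, ht1, ht2⟩ := hcY a b ha hb (w.toDeleteEdges _ hw')
            rw [Walk.support_transfer] at ht2
            exact ⟨t, Or.inl ht1, ht2⟩
        have hcYx : Cuts G A B (Y ∪ {x}) := hcutU x (by simp)
        have hcYy : Cuts G A B (Y ∪ {y}) := hcutU y (by simp)
        have hxY : x ∉ Y := by
          intro hc
          have heq : Y ∪ {x} = Y := by
            rw [Set.union_singleton, Set.insert_eq_of_mem hc]
          have := hmain _ (heq ▸ hcYx)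
          omega
        have hyY : y ∉ Y := by
          intro hc
          have heq : Y ∪ {y} = Y := by
            rw [Set.union_singleton, Set.insert_eq_of_mem hc]
          have := hmain _ (heq ▸ hcYy)
          omega
        have hYk : Y.ncard + 1 = k := by
          have h1 := hmain _ hcYx
          have h2 : (Y ∪ {x}).ncard ≤ Y.ncard + 1 := by
            rw [Set.union_singleton]
            exact Set.ncard_insert_le _ _
          omega
        have hnc : ¬ Cuts G A B Y := by
          intro hc
          have := hmain Y hc
          omega
        rw [Cuts] at hnc
        push_neg at hnc
        obtain ⟨a₀, b₀, ha₀, hb₀, w₀, hw₀⟩ := hnc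
        have hew₀ : s(x, y) ∈ w₀.edges := by
          by_contra hew
          have hw' : ∀ e ∈ w₀.edges, e ∉ ({s(x, y)} : Set (Sym2 V)) := by
            intro e hee hee'
            rw [Set.mem_singleton_iff] at hee'
            exact hew (hee' ▸ hee)
          obtain ⟨t, ht1, ht2⟩ := hcY a₀ b₀ ha₀ hb₀ (w₀.toDeleteEdges _ hw')
          rw [Walk.support_transfer] at ht2
          exact hw₀ t ht1 ht2
        obtain ⟨t, htxy, w₁, L₁, hsup₁, hL₁, hsub₁, hesub₁⟩ :=
          takeUntilFirst w₀ {x, y} ⟨x, w₀.fst_mem_support_of_mem_edges hew₀, by simp⟩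
        obtain ⟨s', hsxy, w₂, M₂, hsup₂, hM₂, hsub₂, hesub₂⟩ :=
          dropFromLast w₀ {x, y} ⟨x, w₀.fst_mem_support_of_mem_edges hew₀, by simp⟩
        have he₁ : s(x, y) ∉ w₁.edges := by
          intro hc
          have hx1 : x ∈ w₁.support := w₁.fst_mem_support_of_mem_edges hc
          have hy1 : y ∈ w₁.support := w₁.snd_mem_support_of_mem_edges hc
          rw [hsup₁] at hx1 hy1
          rcases List.mem_append.mp hx1 with h1 | h1
          · exact hL₁ x h1 (by simp)
          · rcases List.mem_append.mp hy1 with h2 | h2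
            · exact hL₁ y h2 (by simp)
            · simp only [List.mem_singleton] at h1 h2
              exact hxy_ne (h1.trans h2.symm)
        have he₂ : s(x, y) ∉ w₂.edges := by
          intro hc
          have hx1 : x ∈ w₂.support := w₂.fst_mem_support_of_mem_edges hc
          have hy1 : y ∈ w₂.support := w₂.snd_mem_support_of_mem_edges hc
          rw [hsup₂] at hx1 hy1
          rcases List.mem_cons.mp hx1 with h1 | h1
          · rcases List.mem_cons.mp hy1 with h2 | h2
            · exact hxy_ne (h1.trans h2.symm)
            · exact hM₂ y h2 (by simp)
          · exact hM₂ x h1 (by simp)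
        have he₁' : ∀ e ∈ w₁.edges, e ∉ ({s(x, y)} : Set (Sym2 V)) := by
          intro e hee hee'
          rw [Set.mem_singleton_iff] at hee'
          exact he₁ (hee' ▸ hee)
        have he₂' : ∀ e ∈ w₂.edges, e ∉ ({s(x, y)} : Set (Sym2 V)) := by
          intro e hee hee'
          rw [Set.mem_singleton_iff] at hee'
          exact he₂ (hee' ▸ hee)
        have hw₁Y : ∀ z ∈ (w₁.toDeleteEdges _ he₁').support, z ∉ Y := by
          intro z hz hzY
          rw [Walk.support_transfer] at hz
          exact hw₀ z hzY (hsub₁ z hz)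
        have hw₂Y : ∀ z ∈ (w₂.toDeleteEdges _ he₂').support, z ∉ Y := by
          intro z hz hzY
          rw [Walk.support_transfer] at hz
          exact hw₀ z hzY (hsub₂ z hz)
        have hs'D : ∀ a ∈ A, ∀ w : G'.Walk a s', ∃ z ∈ w.support, z ∈ Y := by
          intro a ha w
          by_contra hcon
          push_neg at hcon
          obtain ⟨tt, ht1, ht2⟩ := hcY a b₀ ha hb₀ (w.append (w₂.toDeleteEdges _ he₂'))
          rw [Walk.mem_support_append_iff] at ht2
          rcases ht2 with ht2 | ht2
          · exact hcon tt ht2 ht1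
          · exact hw₂Y tt ht2 ht1
        have hts' : t ≠ s' := by
          intro hc
          obtain ⟨z, hz1, hz2⟩ := hs'D a₀ ha₀ ((w₁.toDeleteEdges _ he₁').copy rfl hc)
          rw [Walk.support_copy] at hz1
          exact hw₁Y z hz1 hz2
        have hIH : ∀ A B : Set V, (∀ T, Cuts G' A B T → k ≤ T.ncard) → DisjFam G' A B k :=
          fun A B h => ih G' A B k hcard' h
        have hxD' : ∃ a ∈ A, ∃ w : G'.Walk a t, ∀ z ∈ w.support, z ∉ Y :=
          ⟨a₀, ha₀, w₁.toDeleteEdges _ he₁', hw₁Y⟩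
        simp only [Set.mem_insert_iff, Set.mem_singleton_iff] at htxy hsxy
        have hAvoid : ∀ (u : V) (ht : t = u), ∃ a ∈ A, ∃ w : G'.Walk a u,
            ∀ z ∈ w.support, z ∉ Y := by
          intro u ht
          refine ⟨a₀, ha₀, (w₁.toDeleteEdges _ he₁').copy rfl ht, ?_⟩
          intro z hz
          rw [Walk.support_copy] at hz
          exact hw₁Y z hz
        have hsDgen : ∀ (u : V) (hu : s' = u), ∀ a ∈ A, ∀ w : G'.Walk a u,
            ∃ z ∈ w.support, z ∈ Y := by
          intro u hu a ha w
          obtain ⟨z, hz1, hz2⟩ := hs'D a ha (w.copy rfl hu.symm)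
          rw [Walk.support_copy] at hz1
          exact ⟨z, hz1, hz2⟩
        rcases htxy with ht | ht
        · have hs'y : s' = y := by
            rcases hsxy with hh | hh
            · exact absurd (ht.trans hh.symm) hts'
            · exact hh
          exact mengerStep G' A B k hadj hG'def Y hIH hmain hcY hYk hxY hyY hcYx hcYy
            (hAvoid x ht) (hsDgen y hs'y)
        · have hs'x : s' = x := by
            rcases hsxy with hh | hh
            · exact hh
            · exact absurd (ht.trans hh.symm) hts'
          have hG'' : G' = G.deleteEdges {s(y, x)} := by
            rw [hG'def, Sym2.eq_swap]
          exact mengerStep G' A B k hadj.symm hG'' Y hIH hmain hcY hYk hyY hxY hcYy hcYx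
            (hAvoid y ht) (hsDgen x hs'x)

/-- Finite Menger's theorem (`A`–`B` walk version). -/
theorem mengerFin [Fintype V] (G : SimpleGraph V) (A B : Set V) (k : ℕ)
    (hmain : ∀ T, Cuts G A B T → k ≤ T.ncard) : DisjFam G A B k :=
  mengerFinAux G.edgeSet.ncard G A B k le_rfl hmain


/-- Push a walk whose support lies in `A` down into the induced subgraph on `A`. -/
theorem toInduceWalk {A : Set V} :
    ∀ {a b : V} (w : G.Walk a b) (h : ∀ z ∈ w.support, z ∈ A),
    ∃ w' : (G.induce A).Walk ⟨a, h a w.start_mem_support⟩ ⟨b, h b w.end_mem_support⟩,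
      ∀ z ∈ w'.support, (z : V) ∈ w.support := by
  intro a b w
  induction w with
  | nil =>
    intro h
    exact ⟨Walk.nil, by simp⟩
  | @cons p c d hadj w ih =>
    intro h
    obtain ⟨w', hw'⟩ := ih (fun z hz => h z (by simp [hz]))
    have hadj' : (G.induce A).Adj ⟨p, h p (by simp)⟩ ⟨c, h c (by simp)⟩ := hadj
    refine ⟨Walk.cons hadj' w', ?_⟩
    intro z hz
    rcases List.mem_cons.mp ((Walk.support_cons _ _) ▸ hz) with hz1 | hz1
    · rw [hz1]; simp
    · have := hw' z hz1
      simp [this]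

/-- A fan of `n` walks from `v` to `S`, pairwise meeting only in `v`. -/
def FanN (G : SimpleGraph V) (S : Set V) (v : V) (n : ℕ) : Prop :=
  ∃ (e : Fin n → V) (w : ∀ i, G.Walk v (e i)), (∀ i, e i ∈ S) ∧
    ∀ i j, i ≠ j → ∀ x, x ∈ (w i).support → x ∈ (w j).support → x = v

theorem fanN_mono {S : Set V} {v : V} {n m : ℕ} (h : FanN G S v n) (hmn : m ≤ n) :
    FanN G S v m := by
  obtain ⟨e, w, he, hd⟩ := h
  exact ⟨fun i => e (Fin.castLE hmn i), fun i => w (Fin.castLE hmn i),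
    fun i => he _, fun i j hij => hd _ _ (fun hc => hij (by
      simpa [Fin.ext_iff] using congrArg Fin.val hc))⟩

theorem fanN_zero {S : Set V} {v : V} : FanN G S v 0 :=
  ⟨Fin.elim0, fun i => i.elim0, fun i => i.elim0, fun i => i.elim0⟩


theorem localSep {S : Set V} {v : V} (hv : v ∉ S) (m : ℕ)
    (e : Fin m → V) (P : ∀ i, G.Walk v (e i)) (heS : ∀ i, e i ∈ S)
    (hdisj : ∀ i j, i ≠ j → ∀ x, x ∈ (P i).support → x ∈ (P j).support → x = v)
    (hnofan : ¬ FanN G S v (m + 1))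
    (U : Set V) (hU : U = {v} ∪ ⋃ i, {z | z ∈ (P i).support})
    (A : Set V) (hAfin : A.Finite) (hUA : U ⊆ A) :
    ∃ T : Set V, T ⊆ U \ {v} ∧ T.ncard ≤ m ∧
      ∀ s ∈ S, s ∈ A → ∀ w : G.Walk v s, (∀ z ∈ w.support, z ∈ A) →
        ∃ t ∈ T, t ∈ w.support := by
  classical
  haveI : Fintype ↥A := hAfin.fintype
  have hvU : v ∈ U := by rw [hU]; exact Or.inl rfl
  have hvA : v ∈ A := hUA hvU
  set H : SimpleGraph ↥A := G.induce A with hH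
  set vh : ↥A := ⟨v, hvA⟩ with hvh
  set Es : Set (Sym2 ↥A) := {e | vh ∈ e} with hEs
  set Gs : SimpleGraph ↥A := H.deleteEdges Es with hGs
  set As : Set ↥A := {u | H.Adj vh u} with hAs
  set Bs : Set ↥A := {u | (u : V) ∈ S} with hBs
  have hnov : ∀ (p q : ↥A) (w : Gs.Walk p q), p ≠ vh → vh ∉ w.support := by
    intro p q w
    induction w with
    | nil =>
      intro h hmem
      simp only [Walk.support_nil, List.mem_singleton] at hmem
      exact h hmem.symm
    | @cons p c q hadj w ih =>
      intro hp hmem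
      rcases List.mem_cons.mp ((Walk.support_cons _ _) ▸ hmem) with h1 | h1
      · exact hp h1.symm
      · have hGadj := hadj
        rw [hGs, deleteEdges_adj] at hGadj
        have hc : c ≠ vh := by
          intro hcv
          exact hGadj.2 (by rw [hEs]; simp [hcv])
        exact ih hc h1
  have hnodisj : ¬ DisjFam Gs As Bs (m + 1) := by
    rintro ⟨pa, qb, w, hpa, hqb, hd⟩
    apply hnofan
    refine ⟨fun i => (qb i : V),
      fun i => ((Walk.cons (show H.Adj vh (pa i) from hpa i) (upW (w i))).map (Embedding.induce A).toHom).copy rfl rfl,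
      fun i => hqb i, ?_⟩
    intro i j hij z hzi hzj
    change z ∈ ((Walk.cons (show H.Adj vh (pa i) from hpa i) (upW (w i))).map (Embedding.induce A).toHom).support at hzi
    change z ∈ ((Walk.cons (show H.Adj vh (pa j) from hpa j) (upW (w j))).map (Embedding.induce A).toHom).support at hzj
    rw [Walk.support_map] at hzi hzj
    obtain ⟨z1, hz1, hz1e⟩ := List.mem_map.mp hzi
    obtain ⟨z2, hz2, hz2e⟩ := List.mem_map.mp hzj
    have hz1v : (z1 : V) = z := hz1e
    have hz2v : (z2 : V) = z := hz2e
    have hz12 : z1 = z2 := Subtype.ext (hz1v.trans hz2v.symm)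
    rcases List.mem_cons.mp ((Walk.support_cons _ _) ▸ hz1) with hc1 | hc1
    · rw [hc1] at hz1v; exact hz1v ▸ rfl
    · rcases List.mem_cons.mp ((Walk.support_cons _ _) ▸ hz2) with hc2 | hc2
      · rw [hc2] at hz2v; exact hz2v ▸ rfl
      · exfalso
        rw [support_upW] at hc1 hc2
        exact hd i j hij z1 hc1 (hz12 ▸ hc2)
  have hcut : ∃ Ts : Set ↥A, Cuts Gs As Bs Ts ∧ Ts.ncard ≤ m := by
    by_contra hc
    push_neg at hc
    apply hnodisj
    apply mengerFin
    intro T hT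
    have := hc T hT
    omega
  obtain ⟨Ts, hTsCut, hTsm⟩ := hcut
  set Ts' : Set ↥A := Ts \ {vh} with hTs'
  have hvTs' : vh ∉ Ts' := by simp [hTs']
  have hsepH : ∀ (s : ↥A), (s : V) ∈ S → ∀ w : H.Walk vh s, ∃ t ∈ Ts', t ∈ w.support := by
    intro s hsS w
    have hsv : s ≠ vh := by
      intro hc
      apply hv
      have : (s : V) = v := by rw [hc]
      rwa [this] at hsS
    have hp := w.bypass_isPath
    have hpsub := w.support_bypass_subset
    generalize w.bypass = p at hp hpsub
    cases p with
    | nil => exact absurd rfl hsv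
    | @cons _ c _ hadj p' =>
      have hvp' : vh ∉ p'.support := ((Walk.cons_isPath_iff _ _).mp hp).2
      have he' : ∀ e2 ∈ p'.edges, e2 ∉ Es := by
        intro e2 he2 heEs
        rw [hEs] at heEs
        induction e2 using Sym2.ind with
        | _ u1 u2 =>
          rcases Sym2.mem_iff.mp heEs with h1 | h1
          · exact hvp' (h1 ▸ p'.fst_mem_support_of_mem_edges he2)
          · exact hvp' (h1 ▸ p'.snd_mem_support_of_mem_edges he2)
      obtain ⟨t, ht, hts⟩ := hTsCut c s hadj hsS (p'.toDeleteEdges Es he')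
      rw [Walk.support_transfer] at hts
      have htv : t ≠ vh := fun hc => hvp' (hc ▸ hts)
      refine ⟨t, by simp [hTs', ht, htv], ?_⟩
      exact hpsub (by simp [hts])
  have hPA : ∀ i, ∀ z ∈ (P i).support, z ∈ A := by
    intro i z hz
    apply hUA
    rw [hU]
    exact Or.inr (Set.mem_iUnion.mpr ⟨i, hz⟩)
  have hts : ∀ i : Fin m, ∃ t : ↥A, t ∈ Ts' ∧ (t : V) ∈ (P i).support := by
    intro i
    obtain ⟨w', hw'⟩ := toInduceWalk (P i) (hPA i)
    obtain ⟨t, ht, hts⟩ := hsepH ⟨e i, hPA i _ (P i).end_mem_support⟩ (heS i) w'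
    exact ⟨t, ht, hw' t hts⟩
  choose t ht1 ht2 using hts
  have htinj : Function.Injective t := by
    intro i j hij
    by_contra hne
    have h2 : (t i : V) ∈ (P j).support := by rw [hij]; exact ht2 j
    have hveq := hdisj i j hne (t i) (ht2 i) h2
    exact hvTs' ((Subtype.ext hveq : t i = vh) ▸ ht1 i)
  have hrange : Set.range t = Ts' := by
    apply Set.eq_of_subset_of_ncard_le
    · rintro u ⟨i, rfl⟩; exact ht1 i
    · have h1 : (Set.range t).ncard = m := by
        rw [← Set.image_univ, Set.ncard_image_of_injective _ htinj, Set.ncard_univ]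
        simp
      have h2 : Ts'.ncard ≤ Ts.ncard := Set.ncard_le_ncard Set.diff_subset (Set.toFinite _)
      omega
    · exact Set.toFinite _
  refine ⟨Subtype.val '' Ts', ?_, ?_, ?_⟩
  · rintro z ⟨t', ht', rfl⟩
    obtain ⟨i, rfl⟩ : ∃ i, t i = t' := by
      have : t' ∈ Set.range t := hrange ▸ ht'
      exact this
    refine ⟨?_, ?_⟩
    · rw [hU]; exact Or.inr (Set.mem_iUnion.mpr ⟨i, ht2 i⟩)
    · intro hc
      rw [Set.mem_singleton_iff] at hc
      exact hvTs' ((Subtype.ext hc : t i = vh) ▸ ht1 i)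
  · have h1 : (Subtype.val '' Ts').ncard = Ts'.ncard :=
      Set.ncard_image_of_injective _ Subtype.val_injective
    have h2 : Ts'.ncard ≤ Ts.ncard := Set.ncard_le_ncard Set.diff_subset (Set.toFinite _)
    omega
  · intro s hsS hsA w hwA
    obtain ⟨w', hw'⟩ := toInduceWalk w hwA
    obtain ⟨t', ht', hts'⟩ := hsepH ⟨s, hsA⟩ hsS w'
    exact ⟨t', ⟨t', ht', rfl⟩, hw' t' hts'⟩


theorem fanExists {v : V} (G : SimpleGraph V) (k : ℕ) (S : Set V) (hv : v ∉ S)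
    (hKS : ∀ T : Set V, T.Finite → T.ncard < k → v ∉ T →
      ∃ s ∈ S, ∃ w : G.Walk v s, ∀ z ∈ w.support, z ∉ T) :
    FanN G S v k := by
  classical
  by_cases hFk : FanN G S v k
  · exact hFk
  exfalso
  set m := Nat.findGreatest (FanN G S v) k with hm
  have hm_le : m ≤ k := Nat.findGreatest_le k
  have hFm : FanN G S v m := Nat.findGreatest_spec (Nat.zero_le k) fanN_zero
  have hmk : m < k := by
    rcases lt_or_eq_of_le hm_le with h | h
    · exact h
    · exact absurd (h ▸ hFm) hFk
  have hnofan : ¬ FanN G S v (m + 1) :=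
    Nat.findGreatest_is_greatest (n := k) (by omega) (by omega)
  obtain ⟨e, P, heS, hdisj⟩ := hFm
  set U : Set V := {v} ∪ ⋃ i, {z | z ∈ (P i).support} with hU
  have hUfin : U.Finite := by
    apply Set.Finite.union (Set.finite_singleton v)
    apply Set.finite_iUnion
    intro i
    exact List.finite_toSet _
  set C : Set (Set V) := {T | T ⊆ U \ {v} ∧ T.ncard ≤ m} with hC
  have hCfin : C.Finite :=
    (Set.Finite.finite_subsets hUfin.diff).subset (fun T hT => hT.1)
  have hglob : ∃ T ∈ C, ∀ s ∈ S, ∀ w : G.Walk v s, ∃ t ∈ T, t ∈ w.support := by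
    by_contra hno
    push_neg at hno
    choose sF hsF wF hwF using hno
    set g : Set V → Set V := fun T =>
      if h : T ∈ C then {z | z ∈ (wF T h).support} else ∅ with hg
    have hgfin : ∀ T ∈ C, (g T).Finite := by
      intro T hT
      rw [hg]
      simp only [dif_pos hT]
      exact List.finite_toSet _
    set A : Set V := U ∪ ⋃ T ∈ C, g T with hA
    have hAfin : A.Finite := hUfin.union (hCfin.biUnion hgfin)
    obtain ⟨T₀, hT₀sub, hT₀m, hT₀sep⟩ := localSep hv m e P heS hdisj hnofan U hU A hAfin
      Set.subset_union_left
    have hT₀C : T₀ ∈ C := ⟨hT₀sub, hT₀m⟩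
    have hsupA : ∀ z ∈ (wF T₀ hT₀C).support, z ∈ A := by
      intro z hz
      apply Set.mem_union_right
      refine Set.mem_biUnion hT₀C ?_
      rw [hg]
      simp only [dif_pos hT₀C]
      exact hz
    obtain ⟨t, ht1, ht2⟩ := hT₀sep (sF T₀ hT₀C) (hsF T₀ hT₀C)
      (hsupA _ (wF T₀ hT₀C).end_mem_support) (wF T₀ hT₀C) hsupA
    exact hwF T₀ hT₀C t ht1 ht2
  obtain ⟨T, hTC, hTsep⟩ := hglob
  have hTfin : T.Finite := hUfin.subset (hTC.1.trans Set.diff_subset)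
  have hTncard : T.ncard < k := lt_of_le_of_lt hTC.2 hmk
  have hvT : v ∉ T := fun hc => (hTC.1 hc).2 rfl
  obtain ⟨s, hsS, w, hw⟩ := hKS T hTfin hTncard hvT
  obtain ⟨t, ht1, ht2⟩ := hTsep s hsS w
  exact hw t ht2 ht1

end MengerAux

open MengerAux in
theorem statement2 {V : Type*} (G : SimpleGraph V) (k : ℕ) (hk : 0 < k)
    (S : Set V) (hS : S.Nonempty) :
    KSConnected G k S ↔
      ∀ v : V, v ∉ S →
        ∃ (e : Fin k → V) (p : ∀ i, G.Path v (e i)),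
          (∀ i, e i ∈ S) ∧
          ∀ i j, i ≠ j → ∀ x, x ∈ ((p i : G.Walk v (e i)).support) →
            x ∈ ((p j : G.Walk v (e j)).support) → x = v := by
  classical
  constructor
  · intro hKS v hvS
    have hKS' : ∀ T : Set V, T.Finite → T.ncard < k → v ∉ T →
        ∃ s ∈ S, ∃ w : G.Walk v s, ∀ z ∈ w.support, z ∉ T := by
      intro T hTfin hTn hvT
      have henc : T.encard < (k : ℕ∞) := by
        rw [← hTfin.cast_ncard_eq]
        exact_mod_cast hTn
      obtain ⟨s, hs, hsS, hreach⟩ := hKS T henc v hvT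
      obtain ⟨w'⟩ := hreach
      refine ⟨s, hsS, (w'.map (Embedding.induce (Tᶜ : Set V)).toHom).copy rfl rfl, ?_⟩
      intro z hz hzT
      change z ∈ (w'.map (Embedding.induce (Tᶜ : Set V)).toHom).support at hz
      rw [Walk.support_map] at hz
      obtain ⟨z', hz', rfl⟩ := List.mem_map.mp hz
      exact z'.2 hzT
    obtain ⟨e, w, heS, hdisj⟩ := fanExists G k S hvS hKS'
    refine ⟨e, fun i => (w i).toPath, heS, ?_⟩
    intro i j hij x hxi hxj
    exact hdisj i j hij x ((w i).support_toPath_subset hxi)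
      ((w j).support_toPath_subset hxj)
  · intro hFan T hT v hvT
    by_cases hvS : v ∈ S
    · exact ⟨v, hvT, hvS, Reachable.refl _⟩
    · obtain ⟨e, p, heS, hdisj⟩ := hFan v hvS
      have hTfin : T.Finite := by
        rw [← Set.encard_lt_top_iff]
        exact lt_of_lt_of_le hT le_top
      have hTn : T.ncard < k := by
        rw [← hTfin.cast_ncard_eq] at hT
        exact_mod_cast hT
      have hex : ∃ i : Fin k, ∀ z ∈ ((p i : G.Walk v (e i))).support, z ∉ T := by
        by_contra hc
        push_neg at hc
        choose ts hts1 hts2 using hc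
        have hinj : Function.Injective ts := by
          intro i j hij
          by_contra hne
          have h2 : ts i ∈ (p j : G.Walk v (e j)).support := by
            rw [hij]; exact hts1 j
          have := hdisj i j hne (ts i) (hts1 i) h2
          exact hvT (this ▸ hts2 i)
        have h1 : (Set.range ts).ncard = k := by
          rw [← Set.image_univ, Set.ncard_image_of_injective _ hinj, Set.ncard_univ]
          simp
        have h2 : (Set.range ts).ncard ≤ T.ncard :=
          Set.ncard_le_ncard (by rintro z ⟨i, rfl⟩; exact hts2 i) hTfin
        omega
      obtain ⟨i, hi⟩ := hex
      have hmem : ∀ z ∈ (p i : G.Walk v (e i)).support, z ∈ (Tᶜ : Set V) :=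
        fun z hz => hi z hz
      obtain ⟨w', hw'⟩ := toInduceWalk (p i : G.Walk v (e i)) hmem
      exact ⟨e i, hi (e i) (p i : G.Walk v (e i)).end_mem_support, heS i, ⟨w'⟩⟩
end

section
/- Let G and G' be (possibly infinite) simple graphs on the same vertex set, let k be a positive integer, and let S be a nonempty subset of the common vertex set. Suppose that every edge belonging to exactly one of G and G' has both of its endpoints in S (i.e., G' is obtained from G by adding and/or deleting edges with both ends in S). Then G is (k,S)-connected if and only if G' is (k,S)-connected. -/
open SimpleGraph

private lemma ks_aux {V : Type*} {G G' : SimpleGraph V} {S : Set V}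
    (hdiff : ∀ u v : V, ¬ (G.Adj u v ↔ G'.Adj u v) → u ∈ S ∧ v ∈ S)
    {T : Set V} :
    ∀ {v s : (Tᶜ : Set V)}, (G.induce (Tᶜ : Set V)).Walk v s → (s : V) ∈ S →
      ∃ s' : (Tᶜ : Set V), (s' : V) ∈ S ∧ (G'.induce (Tᶜ : Set V)).Reachable v s' := by
  intro v s w
  induction w with
  | nil => exact fun hs => ⟨_, hs, Reachable.refl _⟩
  | @cons a b c h p ih =>
    intro hs
    by_cases ha : (a : V) ∈ S
    · exact ⟨a, ha, Reachable.refl _⟩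
    · obtain ⟨s', hs', hr⟩ := ih hs
      refine ⟨s', hs', Reachable.trans ⟨SimpleGraph.Walk.cons ?_ SimpleGraph.Walk.nil⟩ hr⟩
      have hadj : G.Adj (a : V) (b : V) := h
      have hiff : G.Adj (a : V) (b : V) ↔ G'.Adj (a : V) (b : V) := by
        by_contra hc
        exact ha (hdiff _ _ hc).1
      exact hiff.mp hadj

private lemma ks_dir {V : Type*} {G G' : SimpleGraph V} (k : ℕ) {S : Set V}
    (hdiff : ∀ u v : V, ¬ (G.Adj u v ↔ G'.Adj u v) → u ∈ S ∧ v ∈ S)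
    (h : KSConnected G k S) : KSConnected G' k S := by
  intro T hT v hv
  obtain ⟨s, hs, hsS, hr⟩ := h T hT v hv
  obtain ⟨w⟩ := hr
  obtain ⟨s', hs'S, hr'⟩ := ks_aux hdiff w hsS
  exact ⟨(s' : V), s'.2, hs'S, hr'⟩

theorem statement4 {V : Type*} (G G' : SimpleGraph V) (k : ℕ) (hk : 0 < k)
    (S : Set V) (hS : S.Nonempty)
    (hdiff : ∀ u v : V, ¬ (G.Adj u v ↔ G'.Adj u v) → u ∈ S ∧ v ∈ S) :
    KSConnected G k S ↔ KSConnected G' k S := by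
  constructor
  · exact ks_dir k hdiff
  · exact ks_dir k (fun u v h => hdiff u v (fun h' => h h'.symm))
end

section
/- Let G be a (possibly infinite) simple graph, k a positive integer, and S a nonempty subset of V(G) such that G is (k,S)-connected. Let H be a nonempty subgraph of G, and let S_H = A_G(H) ∪ (S ∩ V(H)), where A_G(H) is the set of vertices of H incident in G with an edge of E(G) − E(H). Then S_H is nonempty and H is (k,S_H)-connected. -/
open SimpleGraph

/-- The set of attachments `A_G(H)` of a subgraph `H` of `G`: vertices of `H` incident
(in `G`) with an edge of `E(G) - E(H)`. -/
def attachmentSet {V : Type*} (G : SimpleGraph V) (H : G.Subgraph) : Set V :=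
  {v | v ∈ H.verts ∧ ∃ u : V, G.Adj v u ∧ ¬ H.Adj v u}

lemma key_walk {V : Type*} (G : SimpleGraph V) (H : G.Subgraph) (S : Set V)
    (T : Set H.verts) :
    ∀ {x y : ↥(((Subtype.val '' T)ᶜ : Set V))},
      (G.induce ((Subtype.val '' T)ᶜ : Set V)).Walk x y →
      ∀ (hx : x.val ∈ H.verts), y.val ∈ S →
      ∃ (s : V) (hs : s ∈ H.verts) (hsT : (⟨s, hs⟩ : H.verts) ∉ T),
        s ∈ attachmentSet G H ∪ (S ∩ H.verts) ∧
        (H.coe.induce (Tᶜ : Set H.verts)).Reachable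
          ⟨⟨x.val, hx⟩, fun hmem => x.property ⟨⟨x.val, hx⟩, hmem, rfl⟩⟩
          ⟨⟨s, hs⟩, hsT⟩ := by
  intro x y W
  induction W with
  | nil =>
    rename_i u
    intro hx hy
    exact ⟨u.val, hx, fun hmem => u.property ⟨⟨u.val, hx⟩, hmem, rfl⟩,
      Or.inr ⟨hy, hx⟩, Reachable.refl _⟩
  | @cons a b c h W ih =>
    intro hx hy
    have hGadj : G.Adj a.val b.val := h
    by_cases hHadj : H.Adj a.val b.val
    · have hb : b.val ∈ H.verts := hHadj.snd_mem
      obtain ⟨s, hs, hsT, hmem, hr⟩ := ih hb hy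
      refine ⟨s, hs, hsT, hmem, Reachable.trans ?_ hr⟩
      refine Adj.reachable ?_
      exact hHadj
    · exact ⟨a.val, hx, fun hmem => a.property ⟨⟨a.val, hx⟩, hmem, rfl⟩,
        Or.inl ⟨hx, b.val, hGadj, hHadj⟩, Reachable.refl _⟩

theorem statement7 {V : Type*} (G : SimpleGraph V) (k : ℕ) (hk : 0 < k)
    (S : Set V) (hS : S.Nonempty) (hG : KSConnected G k S)
    (H : G.Subgraph) (hH : H.verts.Nonempty) :
    (attachmentSet G H ∪ (S ∩ H.verts)).Nonempty ∧
      KSConnected H.coe k (Subtype.val ⁻¹' (attachmentSet G H ∪ (S ∩ H.verts))) := by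
  have hmain : KSConnected H.coe k (Subtype.val ⁻¹' (attachmentSet G H ∪ (S ∩ H.verts))) := by
    intro T hT v hv
    set T' : Set V := Subtype.val '' T with hT'
    have hT'card : T'.encard = T.encard := Subtype.val_injective.encard_image T
    have hvT' : v.val ∉ T' := by
      rintro ⟨u, huT, huv⟩
      exact hv (by rwa [Subtype.ext huv] at huT)
    obtain ⟨s, hsT', hsS, hreach⟩ := hG T' (hT'card ▸ hT) v.val hvT'
    obtain ⟨W⟩ := hreach
    obtain ⟨s', hs', hs'T, hs'mem, hr⟩ := key_walk G H S T W v.2 hsS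
    refine ⟨⟨s', hs'⟩, hs'T, hs'mem, ?_⟩
    convert hr using 2
  constructor
  · obtain ⟨v, hv⟩ := hH
    have h0 : (∅ : Set H.verts).encard < (k : ℕ∞) := by
      simp only [Set.encard_empty]
      exact_mod_cast hk
    obtain ⟨s, _, hsmem, _⟩ := hmain ∅ h0 ⟨v, hv⟩ (Set.notMem_empty _)
    exact ⟨s.val, hsmem⟩
  · exact hmain
end

section
/- Let G be a (possibly infinite) simple graph, k a positive integer, and S a nonempty subset of V(G) such that G is (k,S)-connected. Let H be a subgraph of G with S ⊆ V(H), and let k' be an integer with 0 ≤ k' ≤ k. If H is k'-connected, then G is k'-connected. -/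
open SimpleGraph

/-- `T` is a cutset of `G`: `G - T` is disconnected. -/
def IsCutset {V : Type*} (G : SimpleGraph V) (T : Set V) : Prop :=
  ∃ u v : V, ∃ hu : u ∉ T, ∃ hv : v ∉ T,
    ¬ (G.induce (Tᶜ : Set V)).Reachable ⟨u, hu⟩ ⟨v, hv⟩

/-- `G` is `k`-connected: it has at least `k + 1` vertices and no cutset of
fewer than `k` vertices. -/
def KConnected {V : Type*} (G : SimpleGraph V) (k : ℕ) : Prop :=
  (k : ℕ∞) + 1 ≤ (Set.univ : Set V).encard ∧
    ∀ T : Set V, T.encard < (k : ℕ∞) → ¬ IsCutset G T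

theorem statement8 {V : Type*} (G : SimpleGraph V) (k : ℕ) (hk : 0 < k)
    (S : Set V) (hS : S.Nonempty) (hG : KSConnected G k S)
    (H : G.Subgraph) (hSH : S ⊆ H.verts)
    (k' : ℕ) (hk' : k' ≤ k) (hH : KConnected H.coe k') :
    KConnected G k' := by
  constructor
  · refine le_trans hH.1 ?_
    rw [Set.encard_univ, ENat.card_coe_set_eq]
    exact Set.encard_mono (Set.subset_univ _)
  · intro T hT hcut
    obtain ⟨u, v, hu, hv, hne⟩ := hcut
    have hTk : T.encard < (k : ℕ∞) :=
      lt_of_lt_of_le hT (by exact_mod_cast hk')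
    obtain ⟨s, hs, hsS, hrs⟩ := hG T hTk u hu
    obtain ⟨s', hs', hsS', hrs'⟩ := hG T hTk v hv
    -- restrict T to H.verts
    set T' : Set H.verts := Subtype.val ⁻¹' T with hT'
    have hT'card : T'.encard < (k' : ℕ∞) := by
      refine lt_of_le_of_lt ?_ hT
      calc T'.encard = (Subtype.val '' T').encard :=
            (Subtype.val_injective.encard_image _).symm
        _ ≤ T.encard := Set.encard_mono (Set.image_preimage_subset _ _)
    have hnc := hH.2 T' hT'card
    have hsT' : (⟨s, hSH hsS⟩ : H.verts) ∉ T' := hs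
    have hsT'' : (⟨s', hSH hsS'⟩ : H.verts) ∉ T' := hs'
    have hreach : (H.coe.induce (T'ᶜ : Set H.verts)).Reachable
        ⟨⟨s, hSH hsS⟩, hsT'⟩ ⟨⟨s', hSH hsS'⟩, hsT''⟩ := by
      by_contra hcon
      exact hnc ⟨_, _, hsT', hsT'', hcon⟩
    let f : (H.coe.induce (T'ᶜ : Set H.verts)) →g (G.induce (Tᶜ : Set V)) :=
      { toFun := fun x => ⟨x.1.1, x.2⟩
        map_rel' := by
          intro a b hab
          exact H.adj_sub hab }
    have hmid : (G.induce (Tᶜ : Set V)).Reachable ⟨s, hs⟩ ⟨s', hs'⟩ :=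
      hreach.map f
    exact hne ((hrs.trans hmid).trans hrs'.symm)
end

section
/- Let G be a (possibly infinite) simple graph, k a positive integer, and S a nonempty subset of V(G) such that G is (k,S)-connected. Let H be a subgraph of G with S ⊆ V(H) such that H is isomorphic to the complete graph K_k (i.e., H has exactly k vertices and all (k choose 2) edges between them) and V(H) ≠ V(G). Then G is k-connected. -/
open SimpleGraph

theorem statement9 {V : Type*} (G : SimpleGraph V) (k : ℕ) (hk : 0 < k)
    (S : Set V) (hS : S.Nonempty) (hG : KSConnected G k S)
    (H : G.Subgraph) (hSH : S ⊆ H.verts)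
    (hcard : H.verts.encard = (k : ℕ∞))
    (hcomplete : ∀ u ∈ H.verts, ∀ v ∈ H.verts, u ≠ v → H.Adj u v)
    (hproper : H.verts ≠ Set.univ) :
    KConnected G k := by
  constructor
  · obtain ⟨x, hx⟩ := Set.ne_univ_iff_exists_notMem _ |>.mp hproper
    calc (k : ℕ∞) + 1 = (insert x H.verts).encard := by
          rw [Set.encard_insert_of_notMem hx, hcard, add_comm]
      _ ≤ (Set.univ : Set V).encard := Set.encard_mono (Set.subset_univ _)
  · rintro T hT ⟨u, v, hu, hv, hne⟩
    obtain ⟨s, hs, hsS, hus⟩ := hG T hT u hu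
    obtain ⟨s', hs', hs'S, hvs'⟩ := hG T hT v hv
    obtain ⟨w, hwH, hwT⟩ : ∃ w ∈ H.verts, w ∉ T := by
      by_contra h
      push_neg at h
      exact absurd (hcard ▸ Set.encard_mono h) (not_le.mpr hT)
    have key : ∀ a, ∀ ha : a ∉ T, a ∈ H.verts →
        (G.induce (Tᶜ : Set V)).Reachable ⟨a, ha⟩ ⟨w, hwT⟩ := by
      intro a ha haH
      rcases eq_or_ne a w with rfl | hne'
      · exact Reachable.refl _
      · exact SimpleGraph.Adj.reachable (H.adj_sub (hcomplete a haH w hwH hne'))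
    exact hne ((hus.trans (key s hs (hSH hsS))).trans
      ((key s' hs' (hSH hs'S)).symm.trans hvs'.symm))
end

section
/- Let G be a (possibly infinite) simple graph, k a positive integer, and S a nonempty subset of V(G). Let G' be a graph obtained from G by adding a set R of new vertices (disjoint from V(G)) together with some new edges, such that every new edge is incident with at least one vertex of R and every vertex of R is adjacent in G' only to vertices of R ∪ S. Then G is (k,S)-connected if and only if G' is (k, R ∪ S)-connected. -/
open SimpleGraph

private lemma aux10 {V R : Type*} (G : SimpleGraph V) (S : Set V)
    (G' : SimpleGraph (V ⊕ R))
    (hrestrict : ∀ u v : V, G'.Adj (Sum.inl u) (Sum.inl v) ↔ G.Adj u v)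
    (hnew : ∀ (r : R) (v : V), G'.Adj (Sum.inr r) (Sum.inl v) → v ∈ S)
    (T : Set V) :
    ∀ (x y : ↥((Sum.inl '' T : Set (V ⊕ R))ᶜ)),
      (G'.induce ((Sum.inl '' T : Set (V ⊕ R))ᶜ)).Walk x y →
      ∀ (v : V) (hv : v ∉ T), x.val = Sum.inl v →
      (∃ b, ∃ hb : b ∉ T, y.val = Sum.inl b ∧
        (G.induce (Tᶜ : Set V)).Reachable ⟨v, hv⟩ ⟨b, hb⟩) ∨
      (∃ a, ∃ ha : a ∉ T, a ∈ S ∧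
        (G.induce (Tᶜ : Set V)).Reachable ⟨v, hv⟩ ⟨a, ha⟩) := by
  intro x y p
  induction p with
  | nil =>
    intro v hv hx
    exact Or.inl ⟨v, hv, hx, Reachable.refl _⟩
  | @cons u w z h p ih =>
    intro v hv hx
    have hadj : G'.Adj u.val w.val := h
    rw [hx] at hadj
    obtain ⟨wv, hw⟩ := w
    cases wv with
    | inl b =>
      have hb : b ∉ T := fun hbT => hw ⟨b, hbT, rfl⟩
      have hGadj : G.Adj v b := (hrestrict v b).1 hadj
      have hstep : (G.induce (Tᶜ : Set V)).Adj ⟨v, hv⟩ ⟨b, hb⟩ := hGadj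
      rcases ih b hb rfl with ⟨c, hc, hyc, hr⟩ | ⟨a, ha, haS, hr⟩
      · exact Or.inl ⟨c, hc, hyc, hstep.reachable.trans hr⟩
      · exact Or.inr ⟨a, ha, haS, hstep.reachable.trans hr⟩
    | inr r =>
      exact Or.inr ⟨v, hv, hnew r v hadj.symm, Reachable.refl _⟩

/-- `G'` (on vertex set `V ⊕ R`) is obtained from `G` (on vertex set `V`, embedded via
`Sum.inl`) by adding the set `R` of new vertices (embedded via `Sum.inr`), each adjacent
only to vertices of `R ∪ S`: the restriction of `G'` to the old vertices is exactly `G`,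
and every edge of `G'` at a new vertex goes to another new vertex or into `S`. -/
theorem statement10 {V R : Type*} (G : SimpleGraph V) (k : ℕ) (hk : 0 < k)
    (S : Set V) (hS : S.Nonempty)
    (G' : SimpleGraph (V ⊕ R))
    (hrestrict : ∀ u v : V, G'.Adj (Sum.inl u) (Sum.inl v) ↔ G.Adj u v)
    (hnew : ∀ (r : R) (v : V), G'.Adj (Sum.inr r) (Sum.inl v) → v ∈ S) :
    KSConnected G k S ↔
      KSConnected G' k (Sum.inl '' S ∪ Set.range Sum.inr) := by
  constructor
  · intro hG T hT v hv
    cases v with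
    | inr r =>
      exact ⟨Sum.inr r, hv, Or.inr ⟨r, rfl⟩, Reachable.refl _⟩
    | inl u =>
      set T₀ : Set V := Sum.inl ⁻¹' T with hT₀def
      have hcard : T₀.encard < (k : ℕ∞) := by
        calc T₀.encard = (Sum.inl '' T₀ : Set (V ⊕ R)).encard :=
              (Sum.inl_injective.encard_image _).symm
          _ ≤ T.encard := Set.encard_le_encard (Set.image_preimage_subset _ _)
          _ < (k : ℕ∞) := hT
      have hu : u ∉ T₀ := hv
      obtain ⟨s, hs, hsS, hreach⟩ := hG T₀ hcard u hu
      refine ⟨Sum.inl s, hs, Or.inl ⟨s, hsS, rfl⟩, ?_⟩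
      let f : ↥(T₀ᶜ : Set V) → ↥(Tᶜ : Set (V ⊕ R)) := fun x => ⟨Sum.inl x.val, x.property⟩
      have hhom : ∀ {a b : ↥(T₀ᶜ : Set V)}, (G.induce (T₀ᶜ : Set V)).Adj a b →
          (G'.induce (Tᶜ : Set (V ⊕ R))).Adj (f a) (f b) := by
        intro a b hab
        exact (hrestrict _ _).2 hab
      obtain ⟨p⟩ := hreach
      exact ⟨p.map ⟨f, hhom⟩⟩
  · intro hG' T hT v hv
    have hTcard : (Sum.inl '' T : Set (V ⊕ R)).encard < (k : ℕ∞) := by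
      rwa [Sum.inl_injective.encard_image]
    have hv' : (Sum.inl v : V ⊕ R) ∉ Sum.inl '' T := by
      rintro ⟨w, hwT, hw⟩
      exact hv (Sum.inl_injective hw ▸ hwT)
    obtain ⟨s', hs', hs'S, hreach⟩ := hG' (Sum.inl '' T) hTcard (Sum.inl v) hv'
    obtain ⟨p⟩ := hreach
    rcases aux10 G S G' hrestrict hnew T _ _ p v hv rfl with
      ⟨b, hb, hyb, hr⟩ | ⟨a, ha, haS, hr⟩
    · rcases hs'S with ⟨s, hsS, hss⟩ | ⟨r, hrr⟩
      · have hsb : s = b := Sum.inl_injective (hss.trans hyb)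
        exact ⟨b, hb, hsb ▸ hsS, hr⟩
      · exact absurd (hrr.trans hyb) (by simp)
    · exact ⟨a, ha, haS, hr⟩
end
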